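/- For d ≥ 2, μ > −1/2, n ≥ 2, 1 ≤ j ≤ n/2 and 1 ≤ k ≤ σ_{n−2j}, the orthonormal ball polynomials of adjacent parameters μ and μ+1 are related by P^n_{j,k}(x; μ) = a^n_j P^n_{j,k}(x; μ+1) − b^n_j P^{n−2}_{j−1,k}(x; μ+1), where a^n_j = (h_{j,n}(μ+1)/h_{j,n}(μ)) · (n−j+μ+(d−1)/2)/(n+μ+(d−1)/2) and b^n_j = (h_{j−1,n−2}(μ+1)/h_{j,n}(μ)) · (n−j−1+d/2)/(n+μ+(d−1)/2). -/

import Mathlib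

open MvPolynomial Matrix

/-- The index set for monomials of total degree `n` in `d` variables:
multi-indices (exponent tuples) summing to `n`. Its cardinality is `r_n^d = C(n+d-1,n)`. -/
abbrev Idx (d n : ℕ) : Type := {ν : Fin d → ℕ // ν ∈ Finset.Nat.antidiagonalTuple d n}

/-- The monomial `x^ν` associated with a multi-index `ν` of total degree `n`;
the family `fun α : Idx d n => monIdx α` is the canonical vector `𝕏_n`. -/
noncomputable def monIdx {d n : ℕ} (α : Idx d n) : MvPolynomial (Fin d) ℝ :=
  MvPolynomial.monomial (Finsupp.equivFunOnFinite.symm α.1) 1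

/-- A polynomial system (PS): a sequence of vectors `ℙ_n` of size `r_n^d` whose
entries are polynomials of total degree `n`, the entries of `ℙ_0,…,ℙ_n` forming a
basis of the polynomials of total degree at most `n`. -/
structure PolySystem (d : ℕ) where
  vec : (n : ℕ) → Idx d n → MvPolynomial (Fin d) ℝ
  degree_eq : ∀ n α, (vec n α).totalDegree = n
  indep : LinearIndependent ℝ (fun p : (Σ n : ℕ, Idx d n) => vec p.1 p.2)
  spans : ∀ (n : ℕ) (p : MvPolynomial (Fin d) ℝ), p.totalDegree ≤ n →
    p ∈ Submodule.span ℝ {q | ∃ m ≤ n, ∃ α : Idx d m, q = vec m α}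

/-- `{ℙ_n}` is an orthogonal polynomial system (OPS) with respect to the moment
functional `u` : `⟨u, 𝕏_m ℙ_n^t⟩ = 0` for `m < n` and `⟨u, 𝕏_n ℙ_n^t⟩` nonsingular. -/
def IsOPS {d : ℕ} (u : MvPolynomial (Fin d) ℝ →ₗ[ℝ] ℝ) (P : PolySystem d) : Prop :=
  (∀ m n : ℕ, m < n → ∀ (α : Idx d m) (β : Idx d n), u (monIdx α * P.vec n β) = 0) ∧
  (∀ n : ℕ, IsUnit (Matrix.of fun α β : Idx d n => u (monIdx α * P.vec n β)).det)

/-- `u` is quasi-definite iff it admits an OPS. -/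
def QuasiDefinite {d : ℕ} (u : MvPolynomial (Fin d) ℝ →ₗ[ℝ] ℝ) : Prop :=
  ∃ P : PolySystem d, IsOPS u P

/-- `H_n = ⟨u, ℙ_n ℙ_n^t⟩`. -/
noncomputable def Hmat {d : ℕ} (u : MvPolynomial (Fin d) ℝ →ₗ[ℝ] ℝ) (P : PolySystem d)
    (n : ℕ) : Matrix (Idx d n) (Idx d n) ℝ :=
  Matrix.of fun α β => u (P.vec n α * P.vec n β)

/-- `P_m(u;x,y) = ℙ_m(x)^t H_m⁻¹ ℙ_m(y)`. -/
noncomputable def kerP {d : ℕ} (u : MvPolynomial (Fin d) ℝ →ₗ[ℝ] ℝ) (P : PolySystem d)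
    (m : ℕ) (x y : Fin d → ℝ) : ℝ :=
  ∑ α, ∑ β, eval x (P.vec m α) * (Hmat u P m)⁻¹ α β * eval y (P.vec m β)

/-- `kerLT u P n = K_{n-1}(u;·,·) = Σ_{m<n} P_m(u;·,·)`, so that `kerLT u P 0 = K_{-1} = 0`. -/
noncomputable def kerLT {d : ℕ} (u : MvPolynomial (Fin d) ℝ →ₗ[ℝ] ℝ) (P : PolySystem d)
    (n : ℕ) (x y : Fin d → ℝ) : ℝ :=
  ∑ m ∈ Finset.range n, kerP u P m x y

/-- `𝖯_n(ξ) = (ℙ_n(ξ_1)|⋯|ℙ_n(ξ_N))`. -/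
noncomputable def Pmat {d N : ℕ} (P : PolySystem d) (ξ : Fin N → (Fin d → ℝ)) (n : ℕ) :
    Matrix (Idx d n) (Fin N) ℝ :=
  Matrix.of fun α i => eval (ξ i) (P.vec n α)

/-- `Kmat u P ξ n = 𝒦_{n-1} = (K_{n-1}(u;ξ_i,ξ_j))_{i,j}`, with `𝒦_{-1} = 0`. -/
noncomputable def Kmat {d N : ℕ} (u : MvPolynomial (Fin d) ℝ →ₗ[ℝ] ℝ) (P : PolySystem d)
    (ξ : Fin N → (Fin d → ℝ)) (n : ℕ) : Matrix (Fin N) (Fin N) ℝ :=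
  Matrix.of fun i j => kerLT u P n (ξ i) (ξ j)

/-- `Kvec u P ξ n x = 𝖪_{n-1}(ξ,x) = (K_{n-1}(u;ξ_1,x),…,K_{n-1}(u;ξ_N,x))^t`, with `𝖪_{-1}=0`. -/
noncomputable def Kvec {d N : ℕ} (u : MvPolynomial (Fin d) ℝ →ₗ[ℝ] ℝ) (P : PolySystem d)
    (ξ : Fin N → (Fin d → ℝ)) (n : ℕ) (x : Fin d → ℝ) : Fin N → ℝ :=
  fun i => kerLT u P n (ξ i) x

/-- A PS is monic if the degree-`n` homogeneous part of the entry of `ℙ_n` indexed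
by `α` is exactly the monomial `x^α`. -/
def PolySystem.IsMonic {d : ℕ} (P : PolySystem d) : Prop :=
  ∀ (n : ℕ) (α : Idx d n) (ν : Fin d →₀ ℕ), (ν.sum fun _ e => e) = n →
    MvPolynomial.coeff ν (P.vec n α) = if ν = Finsupp.equivFunOnFinite.symm α.1 then 1 else 0

/-- Multiplication of a real matrix times a vector of polynomials. -/
noncomputable def matVec {d : ℕ} {a b : Type} [Fintype b] (M : Matrix a b ℝ)
    (w : b → MvPolynomial (Fin d) ℝ) (i : a) : MvPolynomial (Fin d) ℝ :=
  ∑ j, M i j • w j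

/-- The matrix `L_{n,i}` determined by `x_i 𝕏_n = L_{n,i} 𝕏_{n+1}`. -/
noncomputable def Lmat (d n : ℕ) (i : Fin d) : Matrix (Idx d n) (Idx d (n + 1)) ℝ :=
  Matrix.of fun α β => if β.1 = (fun j => α.1 j + if j = i then 1 else 0) then 1 else 0

/-- The unique multi-index of degree 0. -/
def zeroIdx {d : ℕ} : Idx d 0 :=
  ⟨fun _ => 0, by simp [Finset.Nat.mem_antidiagonalTuple]⟩

/-- The degree-2 multi-index `e_i + e_j`. -/
def e2 {d : ℕ} (i j : Fin d) : Idx d 2 :=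
  ⟨fun k => (if k = i then 1 else 0) + (if k = j then 1 else 0), by
    simp [Finset.Nat.mem_antidiagonalTuple, Finset.sum_add_distrib]⟩

/-- `A_{h,2} = Σ_{1≤i≤j≤d} a^{(2)}_{ij} L_{h,j} L_{h+1,i}`. -/
noncomputable def Amat2 {d : ℕ} (a2 : Idx d 2 → ℝ) (h : ℕ) :
    Matrix (Idx d h) (Idx d (h + 2)) ℝ :=
  ∑ i : Fin d, ∑ j : Fin d,
    if i ≤ j then a2 (e2 i j) • (Lmat d h j * Lmat d (h + 1) i) else 0

/-- The polynomial `λ(x) = a_2·𝕏_2 + a_1·𝕏_1 + a_0`. -/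
noncomputable def lamPoly {d : ℕ} (a2 : Idx d 2 → ℝ) (a1 : Idx d 1 → ℝ) (a0 : ℝ) :
    MvPolynomial (Fin d) ℝ :=
  (∑ α : Idx d 2, a2 α • monIdx α) + (∑ α : Idx d 1, a1 α • monIdx α) + MvPolynomial.C a0

open MeasureTheory

/-- Generalized binomial coefficient `C(a,k) = a(a-1)⋯(a-k+1)/k!` for real `a`. -/
noncomputable def genBinom (a : ℝ) (k : ℕ) : ℝ :=
  (∏ j ∈ Finset.range k, (a - j)) / (Nat.factorial k)

/-- The Pochhammer symbol `(a)_m = a(a+1)⋯(a+m-1)`. -/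
noncomputable def poch (a : ℝ) (m : ℕ) : ℝ := (ascPochhammer ℝ m).eval a

/-- The classical Jacobi polynomial `P_n^{(α,β)}` (Szegő's normalization), as a
univariate real polynomial:
`P_n^{(α,β)}(t) = Σ_{s=0}^n C(n+α, n-s) C(n+β, s) ((t-1)/2)^s ((t+1)/2)^{n-s}`. -/
noncomputable def jacobiPoly (α β : ℝ) (n : ℕ) : Polynomial ℝ :=
  ∑ s ∈ Finset.range (n + 1),
    Polynomial.C (genBinom (n + α) (n - s) * genBinom (n + β) s * (1 / 2) ^ n) *
      (Polynomial.X - 1) ^ s * (Polynomial.X + 1) ^ (n - s)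

/-- Evaluation of the Jacobi polynomial at a real point. -/
noncomputable def jacobiP (α β : ℝ) (n : ℕ) (t : ℝ) : ℝ := (jacobiPoly α β n).eval t

/-- The normalizing constant `h_{j,n}(μ)` for the orthonormal ball polynomials. -/
noncomputable def hjn (d : ℕ) (μ : ℝ) (j n : ℕ) : ℝ :=
  Real.sqrt ((poch (μ + 1 / 2) j * poch ((d : ℝ) / 2) (n - j) *
      ((n : ℝ) - (j : ℝ) + μ + ((d : ℝ) - 1) / 2)) /
    ((Nat.factorial j : ℝ) * poch (μ + ((d : ℝ) + 1) / 2) (n - j) *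
      ((n : ℝ) + μ + ((d : ℝ) - 1) / 2)))

/-- The Laplace operator on polynomials, `Δ = Σ_i ∂²/∂x_i²`. -/
noncomputable def mvLaplacian (d : ℕ) :
    MvPolynomial (Fin d) ℝ →ₗ[ℝ] MvPolynomial (Fin d) ℝ :=
  ∑ i : Fin d, ((MvPolynomial.pderiv i).toLinearMap ∘ₗ (MvPolynomial.pderiv i).toLinearMap)

/-- `p` is a harmonic polynomial, homogeneous of degree `m`. -/
def IsHarmonicHomogeneous {d : ℕ} (p : MvPolynomial (Fin d) ℝ) (m : ℕ) : Prop :=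
  p.IsHomogeneous m ∧ mvLaplacian d p = 0

/-- `σ_m = dim ℋ_m^d`, the dimension of the space of harmonic polynomials in `d`
variables homogeneous of degree `m`. -/
noncomputable def sigmaH (d m : ℕ) : ℕ :=
  Module.finrank ℝ
    ↥((MvPolynomial.homogeneousSubmodule (Fin d) ℝ m) ⊓ LinearMap.ker (mvLaplacian d))

/-- The closed unit ball in `ℝ^d`. -/
def ballSet (d : ℕ) : Set (Fin d → ℝ) := {x | ∑ i, x i ^ 2 ≤ 1}

/-- The normalizing constant `ω_μ = Γ(μ+(d+1)/2)/(π^{d/2}Γ(μ+1/2))`. -/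
noncomputable def omegaMu (d : ℕ) (μ : ℝ) : ℝ :=
  Real.Gamma (μ + ((d : ℝ) + 1) / 2) /
    (Real.pi ^ ((d : ℝ) / 2) * Real.Gamma (μ + 1 / 2))

/-- `u` is the classical ball moment functional
`⟨u_μ, p⟩ = ω_μ ∫_{𝔹^d} p(x)(1-‖x‖²)^{μ-1/2} dx`. -/
def IsBallFunctional (d : ℕ) (μ : ℝ) (u : MvPolynomial (Fin d) ℝ →ₗ[ℝ] ℝ) : Prop :=
  ∀ p : MvPolynomial (Fin d) ℝ,
    u p = omegaMu d μ *
      ∫ x in ballSet d, (eval x p) * (1 - ∑ i, x i ^ 2) ^ (μ - 1 / 2 : ℝ)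

/-- The orthonormal ball polynomial
`P^n_{j,·}(x;μ) = h_{j,n}(μ)⁻¹ P_j^{(μ-1/2,n-2j+(d-2)/2)}(2‖x‖²-1) Y(x)`,
evaluated at `x`, for a harmonic polynomial `Y` homogeneous of degree `n-2j`. -/
noncomputable def ballPval (d : ℕ) (μ : ℝ) (n j : ℕ) (Y : MvPolynomial (Fin d) ℝ)
    (x : Fin d → ℝ) : ℝ :=
  (hjn d μ j n)⁻¹ *
    jacobiP (μ - 1 / 2) ((n : ℝ) - 2 * (j : ℝ) + ((d : ℝ) - 2) / 2) j
      (2 * (∑ i, x i ^ 2) - 1) * eval x Y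


lemma genBinom_G1 (a : ℝ) (k : ℕ) :
    (a - k) * genBinom a k = (k + 1) * genBinom a (k + 1) := by
  have hk : (Nat.factorial k : ℝ) ≠ 0 := by positivity
  have hk1 : (Nat.factorial (k + 1) : ℝ) ≠ 0 := by positivity
  simp only [genBinom, Finset.prod_range_succ, Nat.factorial_succ, Nat.cast_mul,
    Nat.cast_add, Nat.cast_one]
  field_simp

lemma genBinom_G3 (a : ℝ) (k : ℕ) :
    ((k : ℝ) + 1) * genBinom (a + 1) (k + 1) = (a + 1) * genBinom a k := by
  have hk : (Nat.factorial k : ℝ) ≠ 0 := by positivity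
  have h : ∏ j ∈ Finset.range (k + 1), (a + 1 - j)
      = (a + 1) * ∏ j ∈ Finset.range k, (a - j) := by
    rw [Finset.prod_range_succ']
    rw [mul_comm]
    congr 1
    · push_cast; ring
    · exact Finset.prod_congr rfl fun i _ => by push_cast; ring
  simp only [genBinom, h, Nat.factorial_succ, Nat.cast_mul, Nat.cast_add, Nat.cast_one]
  field_simp

lemma genBinom_pascal (a : ℝ) (k : ℕ) :
    genBinom (a + 1) (k + 1) = genBinom a (k + 1) + genBinom a k := by
  have hk : (Nat.factorial k : ℝ) ≠ 0 := by positivity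
  have h1 : ∏ j ∈ Finset.range (k + 1), (a + 1 - j)
      = (a + 1) * ∏ j ∈ Finset.range k, (a - j) := by
    rw [Finset.prod_range_succ']
    rw [mul_comm]
    congr 1
    · push_cast; ring
    · exact Finset.prod_congr rfl fun i _ => by push_cast; ring
  have h2 : ∏ j ∈ Finset.range (k + 1), (a - j)
      = (a - k) * ∏ j ∈ Finset.range k, (a - j) := by
    rw [Finset.prod_range_succ, mul_comm]
  simp only [genBinom, h1, h2, Nat.factorial_succ, Nat.cast_mul, Nat.cast_add, Nat.cast_one]
  field_simp
  ring

lemma jacobiP_eval' (α β : ℝ) (n : ℕ) (t : ℝ) :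
    jacobiP α β n t = ∑ s ∈ Finset.range (n + 1),
      genBinom (n + α) (n - s) * genBinom (n + β) s * (1 / 2) ^ n *
        ((t - 1) ^ s * (t + 1) ^ (n - s)) := by
  simp [jacobiP, jacobiPoly, Polynomial.eval_finset_sum, mul_assoc]

lemma genBinom_zero' (a : ℝ) : genBinom a 0 = 1 := by simp [genBinom]

lemma sum_peel' (L R M D E : ℕ → ℝ) (q : ℕ)
    (hM : ∀ s < q + 1, M s = D s - E s)
    (h0 : L 0 = R 0 - D 0)
    (hq : L (q + 1) = R (q + 1) + E q)
    (hmid : ∀ i < q, L (i + 1) = R (i + 1) - D (i + 1) + E i) :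
    ∑ s ∈ Finset.range (q + 1 + 1), L s
      = ∑ s ∈ Finset.range (q + 1 + 1), R s - ∑ s ∈ Finset.range (q + 1), M s := by
  have hM' : ∑ s ∈ Finset.range (q + 1), M s
      = ∑ s ∈ Finset.range (q + 1), D s - ∑ s ∈ Finset.range (q + 1), E s := by
    rw [← Finset.sum_sub_distrib]
    exact Finset.sum_congr rfl fun s hs => hM s (Finset.mem_range.mp hs)
  rw [hM', Finset.sum_range_succ L, Finset.sum_range_succ R,
    Finset.sum_range_succ' L, Finset.sum_range_succ' R, Finset.sum_range_succ' D,
    Finset.sum_range_succ E]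
  have hmain : ∑ i ∈ Finset.range q, L (i + 1)
      = ∑ i ∈ Finset.range q, (R (i + 1) - D (i + 1) + E i) :=
    Finset.sum_congr rfl fun i hi => hmid i (Finset.mem_range.mp hi)
  rw [Finset.sum_add_distrib, Finset.sum_sub_distrib] at hmain
  linarith

lemma jacobi_adj (α β : ℝ) (q : ℕ) (t : ℝ) :
    (2 * ((q : ℝ) + 1) + α + β + 1) * jacobiP α β (q + 1) t
      = (((q : ℝ) + 1) + α + β + 1) * jacobiP (α + 1) β (q + 1) t
        - (((q : ℝ) + 1) + β) * jacobiP (α + 1) β q t := by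
  rw [jacobiP_eval', jacobiP_eval', jacobiP_eval']
  push_cast
  rw [Finset.mul_sum, Finset.mul_sum, Finset.mul_sum]
  have h₁ : (q : ℝ) + 1 + (α + 1) = (q : ℝ) + 1 + α + 1 := by ring
  have h₂ : (q : ℝ) + (α + 1) = (q : ℝ) + 1 + α := by ring
  have h₃ : (q : ℝ) + 1 + β = (q : ℝ) + β + 1 := by ring
  simp only [h₁, h₂, h₃]
  refine sum_peel' _ _ _
    (fun s => ((q : ℝ) + β + 1) * (genBinom ((q : ℝ) + 1 + α) (q - s) *
      genBinom ((q : ℝ) + β) s * (1 / 2) ^ (q + 1) *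
      ((t - 1) ^ s * (t + 1) ^ (q + 1 - s))))
    (fun s => ((q : ℝ) + β + 1) * (genBinom ((q : ℝ) + 1 + α) (q - s) *
      genBinom ((q : ℝ) + β) s * (1 / 2) ^ (q + 1) *
      ((t - 1) ^ (s + 1) * (t + 1) ^ (q - s))))
    q ?_ ?_ ?_ ?_
  · intro s hs
    rw [show q + 1 - s = (q - s) + 1 from by omega, pow_succ (t + 1), pow_succ (t - 1),
      pow_succ ((1 : ℝ) / 2)]
    ring
  · simp only [Nat.sub_zero, Nat.sub_self]
    have hPA := genBinom_pascal ((q : ℝ) + 1 + α) q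
    have hG := genBinom_G1 ((q : ℝ) + 1 + α) q
    rw [genBinom_zero', genBinom_zero', hPA]
    linear_combination (-((1 : ℝ) / 2) ^ (q + 1) * ((t - 1) ^ 0 * (t + 1) ^ (q + 1))) * hG
  · simp only [Nat.sub_self]
    have hG3 := genBinom_G3 ((q : ℝ) + β) q
    rw [genBinom_zero', genBinom_zero']
    linear_combination (((1 : ℝ) / 2) ^ (q + 1) * ((t - 1) ^ (q + 1) * (t + 1) ^ 0)) * hG3
  · intro i hi
    rw [show q + 1 - (i + 1) = (q - (i + 1)) + 1 from by omega,
      show q - i = (q - (i + 1)) + 1 from by omega]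
    have hPA := genBinom_pascal ((q : ℝ) + 1 + α) (q - (i + 1))
    have hPB := genBinom_pascal ((q : ℝ) + β) i
    have hR1 := genBinom_G1 ((q : ℝ) + 1 + α) (q - (i + 1))
    have hR2 := genBinom_G1 ((q : ℝ) + β) i
    rw [Nat.cast_sub (by omega : i + 1 ≤ q)] at hR1
    push_cast at hR1
    set A1 := genBinom ((q : ℝ) + 1 + α) ((q - (i + 1)) + 1) with hA1
    set A0 := genBinom ((q : ℝ) + 1 + α) (q - (i + 1)) with hA0
    set B1 := genBinom ((q : ℝ) + β + 1) (i + 1) with hB1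
    set B0 := genBinom ((q : ℝ) + β) (i + 1) with hB0
    set B0' := genBinom ((q : ℝ) + β) i with hB0'
    set P := ((1 : ℝ) / 2) ^ (q + 1) * ((t - 1) ^ (i + 1) * (t + 1) ^ ((q - (i + 1)) + 1))
      with hP
    linear_combination (-(((q : ℝ) + 1 + α + β + 1) * P * B1)) * hPA
      + (P * (((q : ℝ) + 1) * A1 - ((q : ℝ) + 1 + α + β + 1) * A0)) * hPB
      + (-(P * (B0 + B0'))) * hR1 + (-(P * (A1 + A0))) * hR2

lemma poch_pos (a : ℝ) (m : ℕ) (h : 0 < a) : 0 < poch a m :=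
  ascPochhammer_pos m a h

lemma hjn_pos (d j n : ℕ) (μ : ℝ) (h1 : 0 < μ + 1 / 2) (h2 : 0 < (d : ℝ) / 2)
    (h3 : 0 < μ + ((d : ℝ) + 1) / 2)
    (h4 : 0 < (n : ℝ) - (j : ℝ) + μ + ((d : ℝ) - 1) / 2)
    (h5 : 0 < (n : ℝ) + μ + ((d : ℝ) - 1) / 2) : 0 < hjn d μ j n := by
  apply Real.sqrt_pos.mpr
  apply div_pos
  · exact mul_pos (mul_pos (poch_pos _ _ h1) (poch_pos _ _ h2)) h4
  · have hf : (0 : ℝ) < (Nat.factorial j : ℝ) := by positivity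
    exact mul_pos (mul_pos hf (poch_pos _ _ h3)) h5

set_option maxHeartbeats 1000000 in
/-- connection for adjacent families of ball polynomials.
For `d ≥ 2`, `μ > -1/2`, `n ≥ 2`, `1 ≤ j ≤ n/2`, and a harmonic polynomial `Y`
homogeneous of degree `n-2j` (for instance an element `Y_k^{n-2j}` of an orthonormal
basis of spherical harmonics, `1 ≤ k ≤ σ_{n-2j}`),
`P^n_{j,k}(x;μ) = a^n_j P^n_{j,k}(x;μ+1) - b^n_j P^{n-2}_{j-1,k}(x;μ+1)`. -/
theorem ball_adjacent_families
    {d : ℕ} (hd : 2 ≤ d) {μ : ℝ} (hμ : -(1 / 2) < μ)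
    {n j : ℕ} (hn : 2 ≤ n) (hj1 : 1 ≤ j) (hj2 : 2 * j ≤ n)
    (Y : MvPolynomial (Fin d) ℝ) (hY : IsHarmonicHomogeneous Y (n - 2 * j)) :
    ∀ x : Fin d → ℝ,
      ballPval d μ n j Y x =
        (hjn d (μ + 1) j n / hjn d μ j n) *
            (((n : ℝ) - (j : ℝ) + μ + ((d : ℝ) - 1) / 2) /
              ((n : ℝ) + μ + ((d : ℝ) - 1) / 2)) * ballPval d (μ + 1) n j Y x -
        (hjn d (μ + 1) (j - 1) (n - 2) / hjn d μ j n) *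
            (((n : ℝ) - (j : ℝ) - 1 + (d : ℝ) / 2) /
              ((n : ℝ) + μ + ((d : ℝ) - 1) / 2)) *
          ballPval d (μ + 1) (n - 2) (j - 1) Y x := by
  intro x
  obtain ⟨q, rfl⟩ : ∃ q, j = q + 1 := ⟨j - 1, by omega⟩
  have hdR : (2 : ℝ) ≤ (d : ℝ) := by exact_mod_cast hd
  have hnR : (2 : ℝ) ≤ (n : ℝ) := by exact_mod_cast hn
  have hjR : 2 * ((q : ℝ) + 1) ≤ (n : ℝ) := by exact_mod_cast hj2
  have hn2 : ((n - 2 : ℕ) : ℝ) = (n : ℝ) - 2 := by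
    push_cast [Nat.cast_sub hn]; ring
  have hq1 : (q + 1 - 1 : ℕ) = q := by omega
  have hc : (0 : ℝ) < (n : ℝ) + μ + ((d : ℝ) - 1) / 2 := by linarith
  have h1pos : 0 < hjn d (μ + 1) (q + 1) n := by
    apply hjn_pos <;> push_cast <;> linarith
  have h2pos : 0 < hjn d (μ + 1) q (n - 2) := by
    apply hjn_pos <;> push_cast [Nat.cast_sub hn] <;> linarith
  have h1ne : hjn d (μ + 1) (q + 1) n ≠ 0 := ne_of_gt h1pos
  have h2ne : hjn d (μ + 1) q (n - 2) ≠ 0 := ne_of_gt h2pos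
  set t := 2 * (∑ i, x i ^ 2) - 1 with ht
  have key := jacobi_adj (μ - 1 / 2) ((n : ℝ) - 2 * ((q : ℝ) + 1) + ((d : ℝ) - 2) / 2) q t
  simp only [ballPval, hq1]
  have ha : μ + 1 - 1 / 2 = (μ - 1 / 2) + 1 := by ring
  have hb : ((n - 2 : ℕ) : ℝ) - 2 * (q : ℝ) + ((d : ℝ) - 2) / 2
      = (n : ℝ) - 2 * (((q : ℕ) : ℝ) + 1) + ((d : ℝ) - 2) / 2 := by
    rw [hn2]; ring
  have hb' : (n : ℝ) - 2 * (((q + 1 : ℕ) : ℝ)) + ((d : ℝ) - 2) / 2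
      = (n : ℝ) - 2 * (((q : ℕ) : ℝ) + 1) + ((d : ℝ) - 2) / 2 := by
    push_cast; ring
  rw [ha, hb, hb']
  set J1 := jacobiP (μ - 1 / 2) ((n : ℝ) - 2 * ((q : ℝ) + 1) + ((d : ℝ) - 2) / 2) (q + 1) t
    with hJ1
  set J2 := jacobiP ((μ - 1 / 2) + 1) ((n : ℝ) - 2 * ((q : ℝ) + 1) + ((d : ℝ) - 2) / 2)
    (q + 1) t with hJ2
  set J3 := jacobiP ((μ - 1 / 2) + 1) ((n : ℝ) - 2 * ((q : ℝ) + 1) + ((d : ℝ) - 2) / 2)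
    q t with hJ3
  have key' : ((n : ℝ) + μ + ((d : ℝ) - 1) / 2) * J1
      = ((n : ℝ) - ((q : ℝ) + 1) + μ + ((d : ℝ) - 1) / 2) * J2
        - ((n : ℝ) - ((q : ℝ) + 1) - 1 + (d : ℝ) / 2) * J3 := by
    rw [hJ1, hJ2, hJ3]
    linear_combination key
  have hcne : ((n : ℝ) + μ + ((d : ℝ) - 1) / 2) ≠ 0 := ne_of_gt hc
  have h0pos : 0 < hjn d μ (q + 1) n := by
    apply hjn_pos <;> push_cast <;> linarith
  have h0ne : hjn d μ (q + 1) n ≠ 0 := ne_of_gt h0pos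
  have hJ1eq : J1 = (((n : ℝ) - ((q : ℝ) + 1) + μ + ((d : ℝ) - 1) / 2) /
        ((n : ℝ) + μ + ((d : ℝ) - 1) / 2)) * J2
      - (((n : ℝ) - ((q : ℝ) + 1) - 1 + (d : ℝ) / 2) /
        ((n : ℝ) + μ + ((d : ℝ) - 1) / 2)) * J3 := by
    have h' : J1 = ((((n : ℝ) - ((q : ℝ) + 1) + μ + ((d : ℝ) - 1) / 2) * J2
        - ((n : ℝ) - ((q : ℝ) + 1) - 1 + (d : ℝ) / 2) * J3) /
          ((n : ℝ) + μ + ((d : ℝ) - 1) / 2)) := by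
      rw [eq_div_iff hcne]
      linear_combination key'
    rw [h']
    ring
  have e1 : ∀ (a b c J Yv : ℝ), a ≠ 0 →
      (a / b) * c * (a⁻¹ * J * Yv) = c * (b⁻¹ * J * Yv) := by
    intro a b c J Yv ha
    rw [div_eq_mul_inv]
    have h' : a * b⁻¹ * c * (a⁻¹ * J * Yv) = (a * a⁻¹) * (c * (b⁻¹ * J * Yv)) := by ring
    rw [h', mul_inv_cancel₀ ha, one_mul]
  rw [e1 _ _ _ _ _ h1ne, e1 _ _ _ _ _ h2ne]
  push_cast
  rw [hJ1eq]
  ring
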